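/- For every prime p > 3 and every integer i ≥ 2, the binomial coefficient C(p^i − 1, p^{i−1} + p^{i−2}) is congruent to 1 − p modulo p². -/

import Mathlib

open Finset

private def Aprod (p k : ℕ) : ℕ := ∏ j ∈ Finset.range k, if p ∣ (j+1) then 1 else (j+1)

private def Bprod (p N k : ℕ) : ℕ :=
  ∏ j ∈ Finset.range k, if p ∣ (j+1) then 1 else (p*N - (j+1))

private lemma key (p N : ℕ) (hp : 0 < p) :
    ∀ k, (p*N-1).choose k * Aprod p k = (N-1).choose (k/p) * Bprod p N k := by
  intro k
  induction k with
  | zero => simp [Aprod, Bprod]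
  | succ k ih =>
    by_cases hd : p ∣ (k+1)
    · obtain ⟨m, hm⟩ := hd
      have hm1 : 1 ≤ m := by nlinarith
      have hA : Aprod p (k+1) = Aprod p k := by
        rw [Aprod, Finset.prod_range_succ, if_pos ⟨m, hm⟩, mul_one]; rfl
      have hB : Bprod p N (k+1) = Bprod p N k := by
        rw [Bprod, Finset.prod_range_succ, if_pos ⟨m, hm⟩, mul_one]; rfl
      have hdiv1 : (k+1)/p = m := by rw [hm, Nat.mul_div_cancel_left _ hp]
      have hdiv0 : k/p = m - 1 := by
        have h := Nat.succ_div (a := k) (b := p)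
        rw [if_pos ⟨m, hm⟩] at h
        omega
      rw [hA, hB, hdiv1]
      rw [hdiv0] at ih
      have h1 : (p*N-1).choose (k+1) * m = (p*N-1).choose k * (N - m) := by
        apply Nat.eq_of_mul_eq_mul_left hp
        have := Nat.choose_succ_right_eq (p*N-1) k
        have e1 : p*N-1-k = p*(N-m) := by rw [Nat.mul_sub]; omega
        rw [e1] at this
        calc p * ((p*N-1).choose (k+1) * m) = (p*N-1).choose (k+1) * (k+1) := by
              rw [hm]; ring
          _ = (p*N-1).choose k * (p*(N-m)) := this
          _ = p * ((p*N-1).choose k * (N-m)) := by ring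
      have h2 : (N-1).choose m * m = (N-1).choose (m-1) * (N - m) := by
        have := Nat.choose_succ_right_eq (N-1) (m-1)
        have e1 : m - 1 + 1 = m := by omega
        have e2 : N - 1 - (m-1) = N - m := by omega
        rw [e1, e2] at this; exact this
      apply Nat.eq_of_mul_eq_mul_right hm1
      calc (p*N-1).choose (k+1) * Aprod p k * m
          = ((p*N-1).choose (k+1) * m) * Aprod p k := by ring
        _ = ((p*N-1).choose k * (N-m)) * Aprod p k := by rw [h1]
        _ = ((p*N-1).choose k * Aprod p k) * (N-m) := by ring
        _ = ((N-1).choose (m-1) * Bprod p N k) * (N-m) := by rw [ih]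
        _ = ((N-1).choose (m-1) * (N-m)) * Bprod p N k := by ring
        _ = ((N-1).choose m * m) * Bprod p N k := by rw [h2]
        _ = (N-1).choose m * Bprod p N k * m := by ring
    · have hA : Aprod p (k+1) = Aprod p k * (k+1) := by
        rw [Aprod, Finset.prod_range_succ, if_neg hd]; rfl
      have hB : Bprod p N (k+1) = Bprod p N k * (p*N - (k+1)) := by
        rw [Bprod, Finset.prod_range_succ, if_neg hd]; rfl
      have hdiv : (k+1)/p = k/p := by simp [Nat.succ_div, hd]
      have h1 : (p*N-1).choose (k+1) * (k+1) = (p*N-1).choose k * (p*N - (k+1)) := by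
        have := Nat.choose_succ_right_eq (p*N-1) k
        have e1 : p*N-1-k = p*N - (k+1) := by omega
        rw [e1] at this; exact this
      rw [hA, hB, hdiv]
      calc (p*N-1).choose (k+1) * (Aprod p k * (k+1))
          = ((p*N-1).choose (k+1) * (k+1)) * Aprod p k := by ring
        _ = ((p*N-1).choose k * (p*N - (k+1))) * Aprod p k := by rw [h1]
        _ = ((p*N-1).choose k * Aprod p k) * (p*N - (k+1)) := by ring
        _ = ((N-1).choose (k/p) * Bprod p N k) * (p*N - (k+1)) := by rw [ih]
        _ = (N-1).choose (k/p) * (Bprod p N k * (p*N - (k+1))) := by ring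

private lemma red (p N k : ℕ) (hp : p.Prime) (hk : k ≤ p*N) (hN : p ∣ N) :
    (((p*N-1).choose k : ℕ) : ZMod (p^2)) =
      (-1)^(k - k/p) * (((N-1).choose (k/p) : ℕ) : ZMod (p^2)) := by
  haveI : NeZero (p^2) := ⟨pow_ne_zero 2 hp.pos.ne'⟩
  have hcopA : Nat.Coprime (Aprod p k) (p^2) := by
    apply Nat.Coprime.pow_right
    apply Nat.Coprime.symm
    apply Nat.Coprime.symm
    rw [Aprod]
    apply Nat.Coprime.prod_left
    intro j _
    by_cases hd : p ∣ (j+1)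
    · simp [hd]
    · rw [if_neg hd]
      exact (hp.coprime_iff_not_dvd.mpr hd).symm
  have hAunit : IsUnit ((Aprod p k : ℕ) : ZMod (p^2)) :=
    (ZMod.isUnit_iff_coprime _ _).mpr hcopA
  -- p^2 ∣ p*N
  have hpN : ((p*N : ℕ) : ZMod (p^2)) = 0 := by
    obtain ⟨t, ht⟩ := hN
    have : (p*N : ℕ) = p^2 * t := by rw [ht]; ring
    rw [this, Nat.cast_mul, ZMod.natCast_self, zero_mul]
  -- number of non-multiples
  have hcard : (Finset.filter (fun j => ¬ p ∣ (j+1)) (Finset.range k)).card = k - k/p := by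
    have h1 := Nat.card_multiples k p
    have h2 := Finset.card_filter_add_card_filter_not
      (s := Finset.range k) (p := fun j => p ∣ (j+1))
    simp only [Finset.card_range] at h2
    omega
  have hB : ((Bprod p N k : ℕ) : ZMod (p^2)) =
      (-1)^(k - k/p) * ((Aprod p k : ℕ) : ZMod (p^2)) := by
    rw [Bprod, Aprod, Nat.cast_prod, Nat.cast_prod]
    have : ∀ j ∈ Finset.range k,
        ((if p ∣ (j+1) then 1 else (p*N - (j+1)) : ℕ) : ZMod (p^2)) =
        (if p ∣ (j+1) then 1 else (-1 : ZMod (p^2))) *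
          ((if p ∣ (j+1) then 1 else (j+1) : ℕ) : ZMod (p^2)) := by
      intro j hj
      by_cases hd : p ∣ (j+1)
      · simp [hd]
      · rw [if_neg hd, if_neg hd, if_neg hd]
        have hle : j + 1 ≤ p*N := by
          have := Finset.mem_range.mp hj; omega
        rw [Nat.cast_sub hle, hpN]
        push_cast; ring
    rw [Finset.prod_congr rfl this, Finset.prod_mul_distrib]
    congr 1
    rw [Finset.prod_ite, Finset.prod_const_one, one_mul, Finset.prod_const, hcard]
  have hkey := congrArg (fun n : ℕ => (n : ZMod (p^2))) (key p N hp.pos k)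
  simp only [Nat.cast_mul] at hkey
  rw [hB] at hkey
  apply hAunit.mul_right_cancel
  rw [hkey]; ring

theorem stmt_13 (p i : ℕ) (hp : p.Prime) (hp3 : 3 < p) (hi : 2 ≤ i) :
    ((p ^ i - 1).choose (p ^ (i - 1) + p ^ (i - 2)) : ZMod (p ^ 2)) =
      1 - (p : ZMod (p ^ 2)) := by
  have hodd : Odd p := hp.odd_of_ne_two (by omega)
  induction i, hi using Nat.le_induction with
  | base =>
    have hred := red p p (p+1) hp (by nlinarith) dvd_rfl
    have hd1 : (p+1)/p = 1 := Nat.div_eq_of_lt_le (by omega) (by omega)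
    rw [hd1] at hred
    have hc : p + 1 - 1 = p := by omega
    rw [hc, show p*p = p^2 by ring] at hred
    have egoal : p^(2-1) + p^(2-2) = p + 1 := by norm_num
    rw [egoal, hred, Nat.choose_one_right, hodd.neg_one_pow,
      Nat.cast_sub hp.one_le, Nat.cast_one]
    ring
  | succ i hi2 ih =>
    obtain ⟨j, rfl⟩ : ∃ j, i = j + 2 := ⟨i - 2, by omega⟩
    have hpj : p^(j+3) = p * p^(j+2) := by ring
    set m := p^(j+1) + p^j with hm
    have hkm : p^(j+2) + p^(j+1) = p * m := by rw [hm]; ring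
    have hk : p^(j+2) + p^(j+1) ≤ p * p^(j+2) := by
      have h1 : p^(j+1) ≤ p^(j+2) := Nat.pow_le_pow_right hp.pos (by omega)
      have h2 : 2 * p^(j+2) ≤ p * p^(j+2) := Nat.mul_le_mul_right _ hp.two_le
      linarith
    have hred := red p (p^(j+2)) (p^(j+2)+p^(j+1)) hp hk (dvd_pow_self p (by omega))
    have hdiv : (p^(j+2)+p^(j+1))/p = m := by
      rw [hkm, Nat.mul_div_cancel_left _ hp.pos]
    rw [hdiv] at hred
    have hceven : Even (p^(j+2)+p^(j+1) - m) := by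
      have : p^(j+2)+p^(j+1) - m = (p-1)*m := by
        rw [Nat.sub_mul, one_mul, ← hkm]
      rw [this]
      exact (Nat.Odd.sub_odd hodd odd_one).mul_right m
    rw [hceven.neg_one_pow, one_mul] at hred
    have e1 : p^(j+3) - 1 = p * p^(j+2) - 1 := by rw [hpj]
    have e2 : j + 3 - 1 = j + 2 := by omega
    have e3 : j + 3 - 2 = j + 1 := by omega
    rw [e2, e3, e1, hred]
    rw [show j+2-1 = j+1 by omega, show j+2-2 = j by omega] at ih
    rw [← hm] at ih
    exact ih
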